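/- arXiv:2004.13813 — 2 statements merged into one kernel-verified Lean document; each statement's English description precedes it below -/
import Mathlib

section
/- Let p be a prime, s a real number with s > −1, and α ∈ ℤ_p a nonzero element. Then the integral over {z ∈ ℤ_p : ‖α‖ < ‖z‖ ≤ 1} of ‖z‖^s with respect to the normalized Haar measure μ equals ((1 − p⁻¹)/(1 − p^{−s−1}))·(1 − ‖α‖^{s+1}). -/
open MeasureTheory ENNReal

section PadicHaarAux

variable {p : ℕ} [hp : Fact p.Prime] [MeasurableSpace ℤ_[p]] [BorelSpace ℤ_[p]]

lemma measB (n : ℕ) : MeasurableSet {z : ℤ_[p] | ‖z‖ ≤ (p:ℝ)^(-n:ℤ)} := by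
  have : IsClosed {z : ℤ_[p] | ‖z‖ ≤ (p:ℝ)^(-n:ℤ)} :=
    isClosed_le (by continuity) continuous_const
  exact this.measurableSet

lemma volB (μ : Measure ℤ_[p]) [μ.IsAddHaarMeasure] (hμ : μ Set.univ = 1) (n : ℕ) :
    μ {z : ℤ_[p] | ‖z‖ ≤ (p:ℝ)^(-n:ℤ)} = ((p:ℝ≥0∞)^n)⁻¹ := by
  set B : Set ℤ_[p] := {z | ‖z‖ ≤ (p:ℝ)^(-n:ℤ)} with hB
  haveI : NeZero (p ^ n) := ⟨pow_ne_zero _ hp.out.pos.ne'⟩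
  have hfiber : ∀ c : ZMod (p ^ n), (PadicInt.toZModPow n) ⁻¹' {c} =
      (fun x => -((c.val : ℤ_[p])) + x) ⁻¹' B := by
    intro c
    ext x
    have hy : (PadicInt.toZModPow n) ((c.val : ℤ_[p])) = c := by
      rw [map_natCast]; exact ZMod.natCast_rightInverse c
    simp only [Set.mem_preimage, Set.mem_singleton_iff, hB, Set.mem_setOf_eq]
    rw [PadicInt.norm_le_pow_iff_mem_span_pow, ← PadicInt.ker_toZModPow, RingHom.mem_ker,
      map_add, map_neg, hy]
    constructor
    · intro h; rw [h]; ring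
    · intro h; linear_combination (norm := ring_nf) h  -- maybe wrong, fix
  have hmeasfiber : ∀ c : ZMod (p ^ n), μ ((PadicInt.toZModPow n) ⁻¹' {c}) = μ B := by
    intro c
    rw [hfiber c]
    exact measure_preimage_add μ _ B
  have hdisj : Pairwise (Function.onFun Disjoint
      (fun c : ZMod (p ^ n) => (PadicInt.toZModPow n) ⁻¹' {c})) := by
    intro a b hab
    exact Set.disjoint_left.2 fun x hxa hxb => hab (by
      simp only [Set.mem_preimage, Set.mem_singleton_iff] at hxa hxb; rw [← hxa, ← hxb])
  have hmeas : ∀ c : ZMod (p ^ n), MeasurableSet ((PadicInt.toZModPow n) ⁻¹' {c}) := by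
    intro c
    rw [hfiber c]
    exact (measurable_const_add _) (measB n)
  have hunion : (⋃ c : ZMod (p ^ n), (PadicInt.toZModPow n) ⁻¹' {c}) = Set.univ := by
    ext x; simp
  have hcount : (p : ℝ≥0∞) ^ n * μ B = 1 := by
    calc (p : ℝ≥0∞) ^ n * μ B
        = ∑' c : ZMod (p ^ n), μ ((PadicInt.toZModPow n) ⁻¹' {c}) := by
          rw [tsum_congr hmeasfiber, tsum_fintype, Finset.sum_const, Finset.card_univ,
            ZMod.card, nsmul_eq_mul]
          push_cast
          ring
      _ = μ Set.univ := by rw [← measure_iUnion hdisj hmeas, hunion]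
      _ = 1 := hμ
  have hpn : (p : ℝ≥0∞) ^ n ≠ 0 := pow_ne_zero _ (by exact_mod_cast hp.out.pos.ne')
  have hpnt : (p : ℝ≥0∞) ^ n ≠ ⊤ := by simp
  have : μ B = ((p:ℝ≥0∞)^n)⁻¹ * ((p:ℝ≥0∞)^n * μ B) := by
    rw [← mul_assoc, ENNReal.inv_mul_cancel hpn hpnt, one_mul]
  rw [this, hcount, mul_one]


variable {p : ℕ} [hp : Fact p.Prime] [MeasurableSpace ℤ_[p]] [BorelSpace ℤ_[p]]


lemma hp1 : (1:ℝ) < (p:ℝ) := by exact_mod_cast hp.out.one_lt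

lemma sphere_eq (k : ℕ) : {z : ℤ_[p] | ‖z‖ = (p:ℝ)^(-k:ℤ)} =
    {z : ℤ_[p] | ‖z‖ ≤ (p:ℝ)^(-k:ℤ)} \ {z : ℤ_[p] | ‖z‖ ≤ (p:ℝ)^(-(k+1:ℕ):ℤ)} := by
  ext z
  simp only [Set.mem_setOf_eq, Set.mem_diff, Set.mem_setOf_eq]
  constructor
  · intro h
    refine ⟨h.le, ?_⟩
    rw [h]
    push_cast
    rw [not_le]
    exact zpow_lt_zpow_right₀ hp1 (by omega)
  · rintro ⟨h1, h2⟩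
    have h3 : ¬ ‖z‖ < (p:ℝ)^(-k:ℤ) := by
      rw [PadicInt.norm_lt_pow_iff_norm_le_pow_sub_one]
      intro hc
      apply h2
      convert hc using 2
      push_cast; ring
    linarith [lt_or_eq_of_le h1, h1.lt_or_eq]
  
lemma measS (k : ℕ) : MeasurableSet {z : ℤ_[p] | ‖z‖ = (p:ℝ)^(-k:ℤ)} := by
  rw [sphere_eq]
  exact (measB k).diff (measB (k+1))

lemma volS (μ : Measure ℤ_[p]) [μ.IsAddHaarMeasure] (hμ : μ Set.univ = 1) (k : ℕ) :
    (μ {z : ℤ_[p] | ‖z‖ = (p:ℝ)^(-k:ℤ)}).toReal = (p:ℝ)^(-k:ℤ) - (p:ℝ)^(-(k:ℤ)-1) := by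
  have hple : ((p:ℝ≥0∞)^(k+1))⁻¹ ≤ ((p:ℝ≥0∞)^k)⁻¹ := by
    apply ENNReal.inv_le_inv.2
    apply pow_le_pow_right₀ _ (by omega)
    exact_mod_cast Nat.one_le_iff_ne_zero.2 hp.out.pos.ne'
  have hsub : {z : ℤ_[p] | ‖z‖ ≤ (p:ℝ)^(-(k+1:ℕ):ℤ)} ⊆ {z : ℤ_[p] | ‖z‖ ≤ (p:ℝ)^(-k:ℤ)} := by
    intro z hz
    simp only [Set.mem_setOf_eq] at *
    refine hz.trans ?_
    apply zpow_le_zpow_right₀ hp1.le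
    omega
  have hfin : μ {z : ℤ_[p] | ‖z‖ ≤ (p:ℝ)^(-(k+1:ℕ):ℤ)} ≠ ⊤ := by
    rw [volB μ hμ]; simp [hp.out.pos.ne']
  rw [sphere_eq, measure_diff hsub (measB (k+1)).nullMeasurableSet hfin,
    volB μ hμ, volB μ hμ, ENNReal.toReal_sub_of_le hple (by simp; intro h; exact absurd h hp.out.pos.ne')]
  rw [ENNReal.toReal_inv, ENNReal.toReal_inv, ENNReal.toReal_pow, ENNReal.toReal_pow,
    ENNReal.toReal_natCast]
  rw [← zpow_natCast (p:ℝ) k, ← zpow_natCast (p:ℝ) (k+1), ← zpow_neg, ← zpow_neg]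
  push_cast
  ring_nf

end PadicHaarAux

theorem stmt11 (p : ℕ) [Fact p.Prime]
    [MeasurableSpace ℤ_[p]] [BorelSpace ℤ_[p]]
    (μ : Measure ℤ_[p]) [μ.IsAddHaarMeasure] (hμ : μ Set.univ = 1)
    (s : ℝ) (hs : -1 < s) (α : ℤ_[p]) (hα : α ≠ 0) :
    ∫ z in {z : ℤ_[p] | ‖α‖ < ‖z‖ ∧ ‖z‖ ≤ 1}, ‖z‖ ^ s ∂μ =
      (1 - (p : ℝ)⁻¹) / (1 - (p : ℝ) ^ (-s - 1)) * (1 - ‖α‖ ^ (s + 1)) := by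
  have hp1 : (1:ℝ) < (p:ℝ) := hp1
  have hp0 : (0:ℝ) < (p:ℝ) := by linarith
  set n : ℕ := α.valuation with hn
  have hval : ‖α‖ = (p:ℝ)^(-(n:ℤ)) := by
    exact PadicInt.norm_eq_zpow_neg_valuation hα
  have hnormz : ∀ z : ℤ_[p], z ≠ 0 → ‖z‖ = (p:ℝ)^(-(z.valuation:ℤ)) := by
    intro z hz
    exact PadicInt.norm_eq_zpow_neg_valuation hz
  have hset : {z : ℤ_[p] | ‖α‖ < ‖z‖ ∧ ‖z‖ ≤ 1} =
      ⋃ k ∈ Finset.range n, {z : ℤ_[p] | ‖z‖ = (p:ℝ)^(-(k:ℤ))} := by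
    ext z
    simp only [Set.mem_setOf_eq, Set.mem_iUnion, Finset.mem_range, exists_prop]
    constructor
    · rintro ⟨h1, -⟩
      have hz : z ≠ 0 := by
        rintro rfl
        rw [norm_zero, hval] at h1
        have : (0:ℝ) < (p:ℝ)^(-(n:ℤ)) := by positivity
        linarith
      refine ⟨z.valuation, ?_, (hnormz z hz)⟩
      rw [hval, hnormz z hz] at h1
      have := (zpow_lt_zpow_iff_right₀ hp1).1 h1
      omega
    · rintro ⟨k, hk, hk2⟩
      refine ⟨?_, z.norm_le_one⟩
      rw [hval, hk2]
      exact zpow_lt_zpow_right₀ hp1 (by omega)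
  have hSfin : ∀ k : ℕ, μ {z : ℤ_[p] | ‖z‖ = (p:ℝ)^(-k:ℤ)} < ⊤ := by
    intro k
    calc μ _ ≤ μ Set.univ := measure_mono (Set.subset_univ _)
      _ = 1 := hμ
      _ < ⊤ := by simp
  have hInt : ∀ k : ℕ, IntegrableOn (fun z : ℤ_[p] => ‖z‖ ^ s) {z : ℤ_[p] | ‖z‖ = (p:ℝ)^(-k:ℤ)} μ := by
    intro k
    refine ((integrableOn_const (C := ((p:ℝ)^(-k:ℤ)) ^ s) (hSfin k).ne)).congr_fun ?_ (measS k)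
    intro z hz
    simp only [Set.mem_setOf_eq] at hz
    simp [hz]
  have hdisj : (↑(Finset.range n) : Set ℕ).Pairwise
      (Function.onFun Disjoint (fun k => {z : ℤ_[p] | ‖z‖ = (p:ℝ)^(-k:ℤ)})) := by
    intro a _ b _ hab
    apply Set.disjoint_left.2
    intro z hza hzb
    simp only [Set.mem_setOf_eq] at hza hzb
    rw [hza] at hzb
    have := zpow_right_injective₀ hp0 hp1.ne' hzb
    omega
  rw [hset, integral_biUnion_finset _ (fun k _ => measS k) hdisj (fun k _ => hInt k)]
  -- each summand
  set r : ℝ := (p:ℝ) ^ (-s - 1) with hr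
  have hr0 : 0 < r := Real.rpow_pos_of_pos hp0 _
  have hr1 : r < 1 := Real.rpow_lt_one_of_one_lt_of_neg hp1 (by linarith)
  have hterm : ∀ k : ℕ, (∫ z in {z : ℤ_[p] | ‖z‖ = (p:ℝ)^(-k:ℤ)}, ‖z‖ ^ s ∂μ)
      = (1 - (p:ℝ)⁻¹) * r ^ k := by
    intro k
    rw [setIntegral_congr_fun (measS k) (fun z hz => by
      simp only [Set.mem_setOf_eq] at hz; simp [hz] :
      Set.EqOn (fun z : ℤ_[p] => ‖z‖ ^ s) (fun _ => ((p:ℝ)^(-k:ℤ)) ^ s) _)]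
    rw [integral_const, measureReal_restrict_apply_univ, Measure.real, volS μ hμ k, smul_eq_mul]
    have e1 : ((p:ℝ)^(-k:ℤ)) = (p:ℝ) ^ ((-k : ℝ)) := by
      rw [← Real.rpow_intCast (p:ℝ) (-k)]; push_cast; ring_nf
    have e2 : ((p:ℝ)^(-(k:ℤ)-1)) = (p:ℝ) ^ ((-k - 1 : ℝ)) := by
      rw [← Real.rpow_intCast (p:ℝ) (-(k:ℤ)-1)]; push_cast; ring_nf
    have e3 : r ^ k = (p:ℝ) ^ ((-s-1) * k) := by
      rw [hr, ← Real.rpow_natCast ((p:ℝ) ^ (-s-1)) k, ← Real.rpow_mul hp0.le]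
    rw [e1, e2, e3, ← Real.rpow_mul hp0.le]
    rw [sub_mul, ← Real.rpow_add hp0, ← Real.rpow_add hp0, sub_mul, one_mul,
      ← Real.rpow_neg_one (p:ℝ), ← Real.rpow_add hp0]
    congr 1 <;> congr 1 <;> ring
  rw [Finset.sum_congr rfl (fun k _ => hterm k), ← Finset.mul_sum, geom_sum_eq (by linarith : r ≠ 1)]
  have hαr : ‖α‖ ^ (s+1) = r ^ n := by
    rw [hval, hr]
    rw [← Real.rpow_intCast (p:ℝ) (-(n:ℤ)), ← Real.rpow_mul hp0.le,
      ← Real.rpow_natCast ((p:ℝ) ^ (-s-1)) n, ← Real.rpow_mul hp0.le]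
    congr 1
    push_cast
    ring
  rw [hαr]
  have hr1' : r - 1 ≠ 0 := by linarith
  have h1r : (1:ℝ) - r ≠ 0 := by linarith
  have key : (r ^ n - 1)/(r - 1) = (1 - r ^ n)/(1 - r) := by
    rw [div_eq_div_iff hr1' h1r]; ring
  rw [key]
  ring
end

section
/- Let p be a prime, s a real number with s > −1, and α ∈ ℤ_p a nonzero element. Then the integral over {z ∈ ℤ_p : ‖α‖ ≤ ‖z‖ ≤ 1} of ‖z‖^s with respect to the normalized Haar measure μ equals ((1 − p⁻¹)/(1 − p^{−s−1}))·(1 − p^{−s−1}·‖α‖^{s+1}). -/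
open MeasureTheory
lemma ball_meas (p : ℕ) [Fact p.Prime]
    [MeasurableSpace ℤ_[p]] [BorelSpace ℤ_[p]]
    (μ : Measure ℤ_[p]) [μ.IsAddHaarMeasure] (hμ : μ Set.univ = 1) (k : ℕ) :
    μ {z : ℤ_[p] | ‖z‖ ≤ (p : ℝ) ^ (-(k : ℤ))} = ((p : ENNReal) ^ k)⁻¹ := by
  have hpk0 : (p : ℕ) ^ k ≠ 0 := pow_ne_zero _ (Fact.out : p.Prime).ne_zero
  haveI : NeZero (p ^ k) := ⟨hpk0⟩
  set B : Set ℤ_[p] := {z : ℤ_[p] | ‖z‖ ≤ (p : ℝ) ^ (-(k : ℤ))} with hB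
  have hBmeas : MeasurableSet B :=
    (isClosed_le (continuous_norm) continuous_const).measurableSet
  have hBker : ∀ z : ℤ_[p], z ∈ B ↔ PadicInt.toZModPow k z = 0 := by
    intro z
    rw [hB, Set.mem_setOf_eq, PadicInt.norm_le_pow_iff_mem_span_pow,
      ← PadicInt.ker_toZModPow, RingHom.mem_ker]
  set F : ZMod (p ^ k) → Set ℤ_[p] := fun c => (PadicInt.toZModPow k) ⁻¹' {c} with hF
  have hval : ∀ c : ZMod (p ^ k), PadicInt.toZModPow k ((c.val : ℤ_[p])) = c := by
    intro c
    rw [map_natCast, ZMod.natCast_zmod_val]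
  have hfib : ∀ c : ZMod (p ^ k), F c = (fun z => -((c.val : ℤ_[p])) + z) ⁻¹' B := by
    intro c
    ext z
    simp only [hF, Set.mem_preimage, Set.mem_singleton_iff, hBker, map_add, map_neg, hval]
    constructor
    · intro h; rw [h]; ring
    · intro h
      exact (neg_add_eq_zero.mp h).symm
  have hFmeas : ∀ c, MeasurableSet (F c) := by
    intro c; rw [hfib]; exact hBmeas.preimage (measurable_const_add _)
  have hFμ : ∀ c, μ (F c) = μ B := by
    intro c; rw [hfib]; exact measure_preimage_add μ _ B
  have hdisj : Pairwise (Function.onFun Disjoint F) := by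
    intro a b hab
    simp only [Function.onFun, hF]
    exact Set.disjoint_left.2 fun z hz hz' => hab (by
      simp only [Set.mem_preimage, Set.mem_singleton_iff] at hz hz'; rw [← hz, hz'])
  have hcover : (⋃ c, F c) = Set.univ := by
    ext z; simp [hF]
  have hsum : (1 : ENNReal) = (p ^ k : ℕ) * μ B := by
    rw [← hμ, ← hcover, measure_iUnion hdisj hFmeas, tsum_fintype]
    simp only [hFμ, Finset.sum_const, Finset.card_univ, ZMod.card, nsmul_eq_mul]
  have hpkE : ((p ^ k : ℕ) : ENNReal) ≠ 0 := by exact_mod_cast Nat.cast_ne_zero.2 hpk0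
  have hpkT : ((p ^ k : ℕ) : ENNReal) ≠ ⊤ := ENNReal.natCast_ne_top _
  have : μ B = ((p ^ k : ℕ) : ENNReal)⁻¹ * ((p ^ k : ℕ) * μ B) := by
    rw [← mul_assoc, ENNReal.inv_mul_cancel hpkE hpkT, one_mul]
  rw [this, ← hsum, mul_one]
  simp [Nat.cast_pow]

lemma sph_meas (p : ℕ) [Fact p.Prime]
    [MeasurableSpace ℤ_[p]] [BorelSpace ℤ_[p]]
    (μ : Measure ℤ_[p]) [μ.IsAddHaarMeasure] (hμ : μ Set.univ = 1) (k : ℕ) :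
    (μ {z : ℤ_[p] | ‖z‖ = (p : ℝ) ^ (-(k : ℤ))}).toReal
      = (p : ℝ) ^ (-(k : ℤ)) * (1 - (p : ℝ)⁻¹) := by
  have hp1 : (1 : ℝ) < p := Nat.one_lt_cast.mpr (Fact.out : p.Prime).one_lt
  have hp0 : (0 : ℝ) < p := lt_trans one_pos hp1
  have hsub : {z : ℤ_[p] | ‖z‖ ≤ (p : ℝ) ^ (-((k+1) : ℕ) : ℤ)} ⊆
      {z : ℤ_[p] | ‖z‖ ≤ (p : ℝ) ^ (-(k : ℤ))} := by
    intro z hz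
    refine le_trans hz (zpow_le_zpow_right₀ hp1.le ?_)
    push_cast; omega
  have hSeq : {z : ℤ_[p] | ‖z‖ = (p : ℝ) ^ (-(k : ℤ))} =
      {z : ℤ_[p] | ‖z‖ ≤ (p : ℝ) ^ (-(k : ℤ))} \
      {z : ℤ_[p] | ‖z‖ ≤ (p : ℝ) ^ (-((k+1) : ℕ) : ℤ)} := by
    ext z
    simp only [Set.mem_setOf_eq, Set.mem_diff, not_le]
    constructor
    · intro h
      refine ⟨le_of_eq h, ?_⟩
      rw [h]
      exact zpow_lt_zpow_right₀ hp1 (by push_cast; omega)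
    · rintro ⟨h1, h2⟩
      have hz0 : z ≠ 0 := by
        rintro rfl
        simp only [norm_zero] at h2
        exact absurd h2 (not_lt.2 (zpow_pos hp0 _).le)
      rw [PadicInt.norm_eq_zpow_neg_valuation hz0] at h1 h2 ⊢
      have hv1 : -z.valuation ≤ -(k : ℤ) := (zpow_le_zpow_iff_right₀ hp1).mp h1
      have hv2 : (-((k+1) : ℕ) : ℤ) < -z.valuation := (zpow_lt_zpow_iff_right₀ hp1).mp h2
      congr 1
      push_cast at hv2
      omega
  have hBmeas : MeasurableSet {z : ℤ_[p] | ‖z‖ ≤ (p : ℝ) ^ (-((k+1) : ℕ) : ℤ)} :=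
    (isClosed_le (continuous_norm) continuous_const).measurableSet
  rw [hSeq, measure_diff hsub hBmeas.nullMeasurableSet (measure_ne_top μ _),
    ball_meas p μ hμ k, ball_meas p μ hμ (k+1),
    ENNReal.toReal_sub_of_le (ENNReal.inv_le_inv.2 (pow_le_pow_right₀
      (by exact_mod_cast (Fact.out : p.Prime).one_lt.le) (by omega)))
      (by simp [(Fact.out : p.Prime).ne_zero])]
  have hpE : ((p : ENNReal) ^ k)⁻¹.toReal = ((p:ℝ) ^ k)⁻¹ := by
    simp [ENNReal.toReal_inv, ENNReal.toReal_pow]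
  have hpE' : ((p : ENNReal) ^ (k+1))⁻¹.toReal = ((p:ℝ) ^ (k+1))⁻¹ := by
    simp [ENNReal.toReal_inv, ENNReal.toReal_pow]
  rw [hpE, hpE', zpow_neg, zpow_natCast]
  field_simp
  ring

theorem stmt12 (p : ℕ) [Fact p.Prime]
    [MeasurableSpace ℤ_[p]] [BorelSpace ℤ_[p]]
    (μ : Measure ℤ_[p]) [μ.IsAddHaarMeasure] (hμ : μ Set.univ = 1)
    (s : ℝ) (hs : -1 < s) (α : ℤ_[p]) (hα : α ≠ 0) :
    ∫ z in {z : ℤ_[p] | ‖α‖ ≤ ‖z‖ ∧ ‖z‖ ≤ 1}, ‖z‖ ^ s ∂μ =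
      (1 - (p : ℝ)⁻¹) / (1 - (p : ℝ) ^ (-s - 1)) *
        (1 - (p : ℝ) ^ (-s - 1) * ‖α‖ ^ (s + 1)) := by
  haveI : IsFiniteMeasure μ := ⟨by rw [hμ]; exact ENNReal.one_lt_top⟩
  have hp1 : (1 : ℝ) < p := Nat.one_lt_cast.mpr (Fact.out : p.Prime).one_lt
  have hp0 : (0 : ℝ) < p := lt_trans one_pos hp1
  set n : ℕ := α.valuation with hn
  have hvn : (n : ℤ) = α.valuation := rfl
  have hαn : ‖α‖ = (p : ℝ) ^ (-(n : ℤ)) := by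
    rw [PadicInt.norm_eq_zpow_neg_valuation hα, hvn]
  set S : ℕ → Set ℤ_[p] := fun k => {z : ℤ_[p] | ‖z‖ = (p : ℝ) ^ (-(k : ℤ))} with hS
  -- the annulus is the union of spheres
  have hset : {z : ℤ_[p] | ‖α‖ ≤ ‖z‖ ∧ ‖z‖ ≤ 1} = ⋃ k ∈ Finset.range (n+1), S k := by
    ext z
    simp only [Set.mem_setOf_eq, Set.mem_iUnion, Finset.mem_range, hS]
    constructor
    · rintro ⟨h1, _⟩
      have hα0 : (0:ℝ) < ‖α‖ := norm_pos_iff.mpr hα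
      have hz0 : z ≠ 0 := by
        rintro rfl
        rw [norm_zero] at h1
        linarith
      have hvz : (z.valuation : ℤ) = z.valuation :=
        rfl
      refine ⟨z.valuation, ?_, ?_⟩
      · rw [hαn, PadicInt.norm_eq_zpow_neg_valuation hz0] at h1
        have := (zpow_le_zpow_iff_right₀ hp1).mp h1
        omega
      · rw [PadicInt.norm_eq_zpow_neg_valuation hz0, hvz]
    · rintro ⟨k, hk, hzk⟩
      constructor
      · rw [hαn, hzk]
        exact zpow_le_zpow_right₀ hp1.le (by omega)
      · rw [hzk]
        calc (p:ℝ) ^ (-(k:ℤ)) ≤ (p:ℝ) ^ (0:ℤ) := zpow_le_zpow_right₀ hp1.le (by omega)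
        _ = 1 := zpow_zero _
  have hSmeas : ∀ k, MeasurableSet (S k) :=
    fun k => (isClosed_eq continuous_norm continuous_const).measurableSet
  have hSdisj : (↑(Finset.range (n+1)) : Set ℕ).Pairwise (Function.onFun Disjoint S) := by
    intro a _ b _ hab
    refine Set.disjoint_left.2 fun z hz hz' => hab ?_
    simp only [hS, Set.mem_setOf_eq] at hz hz'
    have := hz.symm.trans hz'
    have := zpow_right_injective₀ hp0 hp1.ne' this
    omega
  have hSint : ∀ k ∈ Finset.range (n+1), IntegrableOn (fun z : ℤ_[p] => ‖z‖ ^ s) (S k) μ := by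
    intro k _
    refine (integrableOn_const (measure_ne_top μ _)).congr_fun
      (g := fun z : ℤ_[p] => ‖z‖ ^ s) (f := fun _ => ((p:ℝ) ^ (-(k:ℤ))) ^ s) ?_ (hSmeas k)
    intro z hz
    simp only [hS, Set.mem_setOf_eq] at hz
    exact (congrArg (· ^ s) hz).symm
  rw [hset, integral_biUnion_finset _ (fun k _ => hSmeas k) hSdisj hSint]
  -- compute each sphere integral
  set r : ℝ := (p : ℝ) ^ (-s - 1) with hr
  have hterm : ∀ k ∈ Finset.range (n+1),
      ∫ z in S k, ‖z‖ ^ s ∂μ = (1 - (p:ℝ)⁻¹) * r ^ k := by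
    intro k _
    rw [setIntegral_congr_fun (hSmeas k)
      (g := fun _ => ((p:ℝ) ^ (-(k:ℤ))) ^ s) (fun z hz => by
        simp only [hS, Set.mem_setOf_eq] at hz
        exact congrArg (· ^ s) hz),
      setIntegral_const, smul_eq_mul]
    have := sph_meas p μ hμ k
    simp only [hS] at this ⊢
    rw [measureReal_def, this]
    -- now pure real arithmetic with rpow
    have e1 : ((p:ℝ) ^ (-(k:ℤ))) ^ s = (p:ℝ) ^ (-(k:ℝ) * s) := by
      rw [← Real.rpow_intCast (p:ℝ) (-(k:ℤ)), ← Real.rpow_mul hp0.le]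
      congr 1
      push_cast
      ring
    have e2 : (p:ℝ) ^ (-(k:ℤ)) = (p:ℝ) ^ (-(k:ℝ)) := by
      rw [← Real.rpow_intCast (p:ℝ) (-(k:ℤ))]
      congr 1
      push_cast
      ring
    have e3 : r ^ k = (p:ℝ) ^ ((-s-1) * (k:ℝ)) := by
      rw [← Real.rpow_natCast r k, hr, ← Real.rpow_mul hp0.le]
    rw [e1, e2, e3,
      show (-s-1) * (k:ℝ) = (-(k:ℝ) * s) + (-(k:ℝ)) by ring,
      Real.rpow_add hp0]
    ring
  rw [Finset.sum_congr rfl hterm, ← Finset.mul_sum]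
  have hr1 : r ≠ 1 := ne_of_lt (Real.rpow_lt_one_of_one_lt_of_neg hp1 (by linarith))
  have hrn : r - 1 ≠ 0 := sub_ne_zero.2 hr1
  rw [geom_sum_eq hr1]
  have hra : r * ‖α‖ ^ (s + 1) = r ^ (n + 1) := by
    rw [hαn, hr, ← Real.rpow_natCast ((p:ℝ) ^ (-s-1)) (n+1),
      ← Real.rpow_intCast (p:ℝ) (-(n:ℤ)), ← Real.rpow_mul hp0.le,
      ← Real.rpow_mul hp0.le, ← Real.rpow_add hp0]
    congr 1
    push_cast
    ring
  rw [hra]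
  have h1r : (1:ℝ) - r ≠ 0 := sub_ne_zero.2 (Ne.symm hr1)
  have hdiv : (r ^ (n+1) - 1)/(r - 1) = (1 - r^(n+1))/(1 - r) := by
    rw [div_eq_div_iff hrn h1r]
    ring
  rw [hdiv]
  ring
end
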